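/- There exists a constant C > 0 such that for all positive integers N, |∑_{n=1}^{N} f(n) − (2^{N+1} − 2^{⌊N/2⌋}·(N − 2⌊N/2⌋ + 3) − 2^{⌊N/3⌋}·(N − 3⌊N/3⌋ + 4))| ≤ C·2^{N/5}, where 2^{N/5} denotes the real number 2 raised to the power N/5. -/

import Mathlib

/-- `f n` is the number of nonempty relatively prime subsets of `{1, ..., n}`. -/
def f (n : ℕ) : ℕ :=
  ((Finset.Icc 1 n).powerset.filter fun A => A.Nonempty ∧ A.gcd id = 1).card

open Finset ArithmeticFunction
open scoped ArithmeticFunction.Moebius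

section Aux

lemma card_powerset_filter_nonempty (S : Finset ℕ) :
    (S.powerset.filter (·.Nonempty)).card = 2 ^ S.card - 1 := by
  have h1 : S.powerset.filter (·.Nonempty) = S.powerset.erase ∅ := by
    ext A
    simp [Finset.mem_erase, Finset.nonempty_iff_ne_empty, and_comm]
  rw [h1, Finset.card_erase_of_mem (Finset.empty_mem_powerset S), Finset.card_powerset]

lemma card_dvd_subsets (n d : ℕ) :
    ((Finset.Icc 1 n).powerset.filter (fun A => A.Nonempty ∧ d ∣ A.gcd _root_.id)).card
      = 2 ^ (n / d) - 1 := by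
  have hset : (Finset.Icc 1 n).powerset.filter (fun A => A.Nonempty ∧ d ∣ A.gcd _root_.id)
      = (((Finset.Icc 1 n).filter (fun x => d ∣ x)).powerset.filter (·.Nonempty)) := by
    ext A
    simp only [Finset.mem_filter, Finset.mem_powerset]
    constructor
    · rintro ⟨hsub, hne, hdvd⟩
      exact ⟨fun a ha => Finset.mem_filter.2 ⟨hsub ha, hdvd.trans (Finset.gcd_dvd ha)⟩, hne⟩
    · rintro ⟨hsub, hne⟩
      exact ⟨fun a ha => (Finset.mem_filter.1 (hsub ha)).1, hne,
        Finset.dvd_gcd fun a ha => (Finset.mem_filter.1 (hsub ha)).2⟩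
  rw [hset, card_powerset_filter_nonempty]
  congr 2
  rw [show Finset.Icc 1 n = Finset.Ioc 0 n from Finset.Icc_add_one_left_eq_Ioc 0 n]
  exact Nat.Ioc_filter_dvd_card_eq_div n d

lemma f_eq (n : ℕ) : (f n : ℤ) =
    ∑ d ∈ Finset.Icc 1 n, (μ d) * (2 ^ (n / d) - 1) := by
  classical
  set T := (Finset.Icc 1 n).powerset.filter (·.Nonempty) with hT
  have hf : (f n : ℤ) = ((T.filter fun A => A.gcd _root_.id = 1).card : ℤ) := by
    unfold f
    rw [hT, Finset.filter_filter]
  have key : ∀ A ∈ T, (if A.gcd _root_.id = 1 then (1:ℤ) else 0)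
      = ∑ d ∈ Finset.Icc 1 n, if d ∣ A.gcd _root_.id then μ d else 0 := by
    intro A hA
    rw [hT, Finset.mem_filter, Finset.mem_powerset] at hA
    obtain ⟨hsub, a, ha⟩ := hA
    have ha' := Finset.mem_Icc.1 (hsub ha)
    set g := A.gcd _root_.id with hg
    have hgd : g ∣ a := Finset.gcd_dvd ha
    have hg0 : g ≠ 0 := by
      rintro h; rw [h] at hgd; simp at hgd; omega
    have hgn : g ≤ n := le_trans (Nat.le_of_dvd (by omega) hgd) ha'.2
    have hdiv : (Finset.Icc 1 n).filter (fun d => d ∣ g) = g.divisors := by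
      ext d
      simp only [Finset.mem_filter, Finset.mem_Icc, Nat.mem_divisors]
      constructor
      · rintro ⟨_, hd⟩; exact ⟨hd, hg0⟩
      · rintro ⟨hd, _⟩
        exact ⟨⟨Nat.pos_of_dvd_of_pos hd (Nat.pos_of_ne_zero hg0),
          le_trans (Nat.le_of_dvd (Nat.pos_of_ne_zero hg0) hd) hgn⟩, hd⟩
    rw [← Finset.sum_filter, hdiv, ← coe_mul_zeta_apply, moebius_mul_coe_zeta, one_apply]
  rw [hf, ← Finset.sum_boole, Finset.sum_congr rfl key, Finset.sum_comm]
  refine Finset.sum_congr rfl fun d hd => ?_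
  rw [← Finset.sum_filter, Finset.sum_const, hT, Finset.filter_filter, card_dvd_subsets n d]
  have h1 : (1:ℕ) ≤ 2 ^ (n / d) := Nat.one_le_two_pow
  rw [nsmul_eq_mul, mul_comm]
  push_cast [h1]
  ring

lemma f_err (n : ℕ) (hn : 1 ≤ n) :
    |(f n : ℤ) - (2^n - 2^(n/2) - 2^(n/3))| ≤ 1 + 2^(n/5) + (n:ℤ) * 2^(n/6) := by
  have h1 : μ 1 = 1 := moebius_apply_one
  have h2 : μ 2 = -1 := moebius_apply_prime (by norm_num)
  have h3 : μ 3 = -1 := moebius_apply_prime (by norm_num)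
  have h4 : μ 4 = 0 := moebius_eq_zero_of_not_squarefree (by decide)
  have h5 : μ 5 = -1 := moebius_apply_prime (by norm_num)
  rcases le_or_gt 5 n with h | h
  · rw [f_eq, show Finset.Icc 1 n = Finset.Ioc 0 n from Finset.Icc_add_one_left_eq_Ioc 0 n,
      ← Finset.sum_Ioc_consecutive _ (show (0:ℕ) ≤ 5 by norm_num) h,
      ← Finset.sum_Ioc_consecutive _ (show (0:ℕ) ≤ 4 by norm_num) (show (4:ℕ) ≤ 5 by norm_num)]
    have e1 : ∑ d ∈ Finset.Ioc 0 4, (μ d : ℤ) * (2 ^ (n / d) - 1)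
        = (2^n - 1) - (2^(n/2) - 1) - (2^(n/3) - 1) := by
      rw [show Finset.Ioc (0:ℕ) 4 = {1,2,3,4} from by decide]
      norm_num [Finset.sum_insert, Finset.mem_insert, h1, h2, h3, h4]
      ring
    have e2 : ∑ d ∈ Finset.Ioc 4 5, (μ d : ℤ) * (2 ^ (n / d) - 1) = -(2^(n/5) - 1) := by
      rw [show Finset.Ioc (4:ℕ) 5 = {5} from by decide]
      simp [h5]
    rw [e1, e2]
    have hR : |∑ d ∈ Finset.Ioc 5 n, (μ d : ℤ) * (2 ^ (n / d) - 1)| ≤ (n:ℤ) * 2^(n/6) := by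
      calc |∑ d ∈ Finset.Ioc 5 n, (μ d : ℤ) * (2 ^ (n / d) - 1)|
          ≤ ∑ d ∈ Finset.Ioc 5 n, |(μ d : ℤ) * (2 ^ (n / d) - 1)| :=
            Finset.abs_sum_le_sum_abs _ _
        _ ≤ ∑ _d ∈ Finset.Ioc 5 n, (2:ℤ)^(n/6) := by
            refine Finset.sum_le_sum fun d hd => ?_
            rw [abs_mul]
            have hd6 : 6 ≤ d := (Finset.mem_Ioc.1 hd).1
            have hpow : (1:ℤ) ≤ 2 ^ (n/d) := one_le_pow₀ (by norm_num)
            have habs : |(2:ℤ) ^ (n / d) - 1| ≤ 2 ^ (n/6) := by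
              rw [abs_of_nonneg (by linarith)]
              have h' : n / d ≤ n / 6 := Nat.div_le_div_left hd6 (by norm_num)
              have := pow_le_pow_right₀ (show (1:ℤ) ≤ 2 by norm_num) h'
              linarith
            calc |(μ d:ℤ)| * |(2:ℤ)^(n/d) - 1| ≤ 1 * (2^(n/6)) :=
                  mul_le_mul abs_moebius_le_one habs (abs_nonneg _) zero_le_one
              _ = 2^(n/6) := one_mul _
        _ = ((Finset.Ioc 5 n).card : ℤ) * 2^(n/6) := by
            rw [Finset.sum_const, nsmul_eq_mul]
        _ ≤ (n:ℤ) * 2^(n/6) := by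
            have hc : (Finset.Ioc 5 n).card ≤ n := by
              rw [Nat.card_Ioc]; omega
            have hp : (0:ℤ) ≤ 2^(n/6) := by positivity
            exact mul_le_mul_of_nonneg_right (by exact_mod_cast hc) hp
    have hpow5 : (1:ℤ) ≤ 2 ^ (n/5) := one_le_pow₀ (by norm_num)
    rw [abs_le] at hR ⊢
    constructor <;> linarith [hR.1, hR.2]
  · interval_cases n <;> rw [f_eq] <;>
      norm_num [show (Finset.Icc 1 1 : Finset ℕ) = {1} from by decide,
        show (Finset.Icc 1 2 : Finset ℕ) = {1,2} from by decide,
        show (Finset.Icc 1 3 : Finset ℕ) = {1,2,3} from by decide,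
        show (Finset.Icc 1 4 : Finset ℕ) = {1,2,3,4} from by decide,
        Finset.sum_insert, Finset.mem_insert, h1, h2, h3, h4]

lemma sum_pow2 (N : ℕ) : ∑ n ∈ Finset.Icc 1 N, (2:ℤ)^n = 2^(N+1) - 2 := by
  induction N with
  | zero => simp
  | succ N ih =>
    rw [Finset.sum_Icc_succ_top (by omega), ih]
    ring

lemma sum_pow_half (N : ℕ) :
    ∑ n ∈ Finset.Icc 1 N, (2:ℤ)^(n/2) = 2^(N/2) * ((N:ℤ) - 2*(N/2 : ℕ) + 3) - 3 := by
  induction N with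
  | zero => simp
  | succ N ih =>
    rw [Finset.sum_Icc_succ_top (by omega), ih]
    obtain ⟨q, r, hr, hN⟩ : ∃ q r, r < 2 ∧ N = 2*q + r := ⟨N/2, N%2, by omega, by omega⟩
    have e1 : N / 2 = q := by omega
    interval_cases r
    · have e2 : (N+1) / 2 = q := by omega
      subst hN; rw [e1, e2]; push_cast; ring
    · have e2 : (N+1) / 2 = q + 1 := by omega
      subst hN; rw [e1, e2]; push_cast; ring

lemma sum_pow_third (N : ℕ) :
    ∑ n ∈ Finset.Icc 1 N, (2:ℤ)^(n/3) = 2^(N/3) * ((N:ℤ) - 3*(N/3 : ℕ) + 4) - 4 := by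
  induction N with
  | zero => simp
  | succ N ih =>
    rw [Finset.sum_Icc_succ_top (by omega), ih]
    obtain ⟨q, r, hr, hN⟩ : ∃ q r, r < 3 ∧ N = 3*q + r := ⟨N/3, N%3, by omega, by omega⟩
    have e1 : N / 3 = q := by omega
    interval_cases r
    · have e2 : (N+1) / 3 = q := by omega
      subst hN; rw [e1, e2]; push_cast; ring
    · have e2 : (N+1) / 3 = q := by omega
      subst hN; rw [e1, e2]; push_cast; ring
    · have e2 : (N+1) / 3 = q + 1 := by omega
      subst hN; rw [e1, e2]; push_cast; ring

lemma key87 : (8/7 : ℝ) ≤ (2:ℝ) ^ ((1:ℝ)/5) := by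
  have h : ((8/7:ℝ) ^ (5:ℕ)) ≤ 2 := by norm_num
  calc (8/7:ℝ) = (((8/7:ℝ) ^ (5:ℕ)) : ℝ) ^ ((1:ℝ)/5) := by
        rw [← Real.rpow_natCast (8/7 : ℝ) 5, ← Real.rpow_mul (by norm_num)]
        norm_num
    _ ≤ (2:ℝ) ^ ((1:ℝ)/5) := Real.rpow_le_rpow (by positivity) h (by norm_num)

lemma sum_rpow_le (N : ℕ) :
    ∑ n ∈ Finset.Icc 1 N, (2:ℝ) ^ ((n:ℝ)/5) ≤ 8 * (2:ℝ) ^ ((N:ℝ)/5) := by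
  induction N with
  | zero => simp
  | succ N ih =>
    rw [Finset.sum_Icc_succ_top (by omega)]
    have hsplit : (2:ℝ) ^ (((N+1:ℕ):ℝ)/5) = (2:ℝ) ^ ((N:ℝ)/5) * (2:ℝ) ^ ((1:ℝ)/5) := by
      rw [← Real.rpow_add (by norm_num)]
      push_cast
      ring_nf
    push_cast at hsplit ⊢
    rw [hsplit]
    have hp : (0:ℝ) < (2:ℝ) ^ ((N:ℝ)/5) := Real.rpow_pos_of_pos (by norm_num) _
    nlinarith [key87, hp]

lemma nat_le_pow30 (n : ℕ) : (n:ℤ) ≤ 2 ^ (n/30 + 5) := by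
  have key : ∀ m : ℕ, (30 * (m+1) : ℤ) ≤ 2 ^ (m + 5) := by
    intro m
    induction m with
    | zero => norm_num
    | succ m ih =>
      have h32 : (2:ℤ) ^ (m + 5) ≥ 32 := by
        calc (32:ℤ) = 2^5 := by norm_num
          _ ≤ 2 ^ (m+5) := pow_le_pow_right₀ (by norm_num) (by omega)
      calc (30 * (m + 1 + 1) : ℤ) = 30 * (m+1) + 30 := by ring
        _ ≤ 2 ^ (m+5) + 2 ^ (m+5) := by linarith
        _ = 2 ^ (m+1+5) := by ring
  have h := key (n/30)
  have h' : (n:ℤ) ≤ 30 * (↑(n/30) + 1) := by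
    have h2 : n < 30 * (n/30) + 30 := by omega
    push_cast
    push_cast at h2
    linarith
  linarith

lemma per_n_bound (n : ℕ) :
    ((1 + 2^(n/5) + (n:ℤ) * 2^(n/6) : ℤ) : ℝ) ≤ 34 * (2:ℝ) ^ ((n:ℝ)/5) := by
  have hb : (1:ℝ) ≤ 2 := by norm_num
  have h1 : ((2:ℝ) ^ (n/5 : ℕ)) ≤ (2:ℝ) ^ ((n:ℝ)/5) := by
    rw [← Real.rpow_natCast 2 (n/5)]
    exact Real.rpow_le_rpow_of_exponent_le hb (Nat.cast_div_le)
  have h30 : ((2:ℝ) ^ (n/30 + 5 : ℕ)) ≤ 32 * (2:ℝ) ^ ((n:ℝ)/30) := by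
    rw [pow_add, ← Real.rpow_natCast 2 (n/30)]
    have := Real.rpow_le_rpow_of_exponent_le hb (Nat.cast_div_le (m := n) (n := 30) (α := ℝ))
    nlinarith [Real.rpow_pos_of_pos (show (0:ℝ) < 2 by norm_num) (((n/30 : ℕ) : ℝ))]
  have h6 : ((2:ℝ) ^ (n/6 : ℕ)) ≤ (2:ℝ) ^ ((n:ℝ)/6) := by
    rw [← Real.rpow_natCast 2 (n/6)]
    exact Real.rpow_le_rpow_of_exponent_le hb (Nat.cast_div_le)
  have hn : ((n:ℝ)) ≤ 32 * (2:ℝ) ^ ((n:ℝ)/30) := by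
    have := nat_le_pow30 n
    have h' : ((n:ℝ)) ≤ (2:ℝ) ^ (n/30 + 5 : ℕ) := by exact_mod_cast this
    linarith
  have hmul : (n:ℝ) * (2:ℝ) ^ (n/6 : ℕ) ≤ 32 * (2:ℝ) ^ ((n:ℝ)/5) := by
    have p30 : (0:ℝ) < (2:ℝ) ^ ((n:ℝ)/30) := Real.rpow_pos_of_pos (by norm_num) _
    have pn6 : (0:ℝ) ≤ ((2:ℝ) ^ (n/6 : ℕ)) := by positivity
    calc (n:ℝ) * (2:ℝ) ^ (n/6 : ℕ)
        ≤ (32 * (2:ℝ) ^ ((n:ℝ)/30)) * (2:ℝ) ^ ((n:ℝ)/6) := by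
          apply mul_le_mul hn h6 pn6 (by positivity)
      _ = 32 * (2:ℝ) ^ ((n:ℝ)/30 + (n:ℝ)/6) := by
          rw [mul_assoc, ← Real.rpow_add (by norm_num)]
      _ = 32 * (2:ℝ) ^ ((n:ℝ)/5) := by rw [show (n:ℝ)/30 + (n:ℝ)/6 = (n:ℝ)/5 by ring]
  have hone : (1:ℝ) ≤ (2:ℝ) ^ ((n:ℝ)/5) := by
    apply Real.one_le_rpow hb (by positivity)
  push_cast
  linarith

end Aux

/-- Partial sum of `f`:
`∑_{n ≤ N} f(n) = 2^{N+1} - 2^{⌊N/2⌋}(N - 2⌊N/2⌋ + 3) - 2^{⌊N/3⌋}(N - 3⌊N/3⌋ + 4) + O(2^{N/5})`. -/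
theorem sum_f_asymptotic :
    ∃ C : ℝ, 0 < C ∧ ∀ N : ℕ, 0 < N →
      |(∑ n ∈ Finset.Icc 1 N, (f n : ℝ)) -
        (2 ^ (N + 1) - 2 ^ (N / 2) * ((N : ℝ) - 2 * (N / 2 : ℕ) + 3)
          - 2 ^ (N / 3) * ((N : ℝ) - 3 * (N / 3 : ℕ) + 4))| ≤
      C * (2 : ℝ) ^ ((N : ℝ) / 5) := by
  refine ⟨300, by norm_num, fun N hN => ?_⟩
  set a := N / 2 with ha
  set b := N / 3 with hb
  set MainZ : ℤ := 2^(N+1) - 2^a * ((N:ℤ) - 2*(a : ℕ) + 3)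
      - 2^b * ((N:ℤ) - 3*(b : ℕ) + 4) with hMainZ
  have hZ : (∑ n ∈ Finset.Icc 1 N, (f n:ℤ)) - MainZ
      = 5 + ∑ n ∈ Finset.Icc 1 N, ((f n:ℤ) - (2^n - 2^(n/2) - 2^(n/3))) := by
    have hsplit : ∑ n ∈ Finset.Icc 1 N, ((f n:ℤ) - (2^n - 2^(n/2) - 2^(n/3)))
        = (∑ n ∈ Finset.Icc 1 N, (f n:ℤ))
          - ((∑ n ∈ Finset.Icc 1 N, (2:ℤ)^n) - (∑ n ∈ Finset.Icc 1 N, (2:ℤ)^(n/2))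
            - (∑ n ∈ Finset.Icc 1 N, (2:ℤ)^(n/3))) := by
      rw [Finset.sum_sub_distrib, Finset.sum_sub_distrib, Finset.sum_sub_distrib]
    rw [hsplit, sum_pow2, sum_pow_half, sum_pow_third, hMainZ, ← ha, ← hb]
    ring
  have hEb : |(∑ n ∈ Finset.Icc 1 N, (f n:ℤ)) - MainZ|
      ≤ 5 + ∑ n ∈ Finset.Icc 1 N, (1 + 2^(n/5) + (n:ℤ) * 2^(n/6)) := by
    rw [hZ]
    calc |5 + ∑ n ∈ Finset.Icc 1 N, ((f n:ℤ) - (2^n - 2^(n/2) - 2^(n/3)))|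
        ≤ |(5:ℤ)| + |∑ n ∈ Finset.Icc 1 N, ((f n:ℤ) - (2^n - 2^(n/2) - 2^(n/3)))| :=
          abs_add_le _ _
      _ ≤ 5 + ∑ n ∈ Finset.Icc 1 N, |(f n:ℤ) - (2^n - 2^(n/2) - 2^(n/3))| := by
          rw [show |(5:ℤ)| = 5 from rfl]
          exact add_le_add_right (Finset.abs_sum_le_sum_abs _ _) 5
      _ ≤ 5 + ∑ n ∈ Finset.Icc 1 N, (1 + 2^(n/5) + (n:ℤ) * 2^(n/6)) := by
          refine add_le_add_right (Finset.sum_le_sum fun n hn => ?_) 5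
          exact f_err n (Finset.mem_Icc.1 hn).1
  have hcast : (∑ n ∈ Finset.Icc 1 N, (f n : ℝ)) -
        (2 ^ (N + 1) - 2 ^ (N / 2) * ((N : ℝ) - 2 * (N / 2 : ℕ) + 3)
          - 2 ^ (N / 3) * ((N : ℝ) - 3 * (N / 3 : ℕ) + 4))
      = (((∑ n ∈ Finset.Icc 1 N, (f n:ℤ)) - MainZ : ℤ) : ℝ) := by
    rw [hMainZ]
    push_cast
    ring
  rw [hcast, ← Int.cast_abs]
  have hone : (1:ℝ) ≤ (2:ℝ) ^ ((N:ℝ)/5) := Real.one_le_rpow (by norm_num) (by positivity)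
  calc ((|(∑ n ∈ Finset.Icc 1 N, (f n:ℤ)) - MainZ| : ℤ) : ℝ)
      ≤ ((5 + ∑ n ∈ Finset.Icc 1 N, (1 + 2^(n/5) + (n:ℤ) * 2^(n/6)) : ℤ) : ℝ) := by
        exact_mod_cast hEb
    _ = 5 + ∑ n ∈ Finset.Icc 1 N, ((1 + 2^(n/5) + (n:ℤ) * 2^(n/6) : ℤ) : ℝ) := by
        push_cast
        ring
    _ ≤ 5 + ∑ n ∈ Finset.Icc 1 N, 34 * (2:ℝ) ^ ((n:ℝ)/5) := by
        refine add_le_add_right (Finset.sum_le_sum fun n _ => ?_) 5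
        exact per_n_bound n
    _ = 5 + 34 * ∑ n ∈ Finset.Icc 1 N, (2:ℝ) ^ ((n:ℝ)/5) := by
        rw [Finset.mul_sum]
    _ ≤ 5 + 34 * (8 * (2:ℝ) ^ ((N:ℝ)/5)) := by
        have := sum_rpow_le N
        nlinarith [this]
    _ ≤ 300 * (2:ℝ) ^ ((N:ℝ)/5) := by nlinarith [hone]
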